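/- arXiv:math/0301038 — 3 statements merged into one kernel-verified Lean document; each statement's English description precedes it below -/
import Mathlib

section
/- A trigonometric polynomial T(t) = Re Σ_{k=0}^n y_k e^{ikt} with complex coefficients y_k (y_0 real) is nonnegative for all real t if and only if there exists an algebraic polynomial X(z) = x_0 + x_1 z + ... + x_n z^n with complex coefficients such that T(t) = |X(e^{it})|^2 for all real t. -/
open Complex Polynomial Finset Filter Topology
noncomputable section
namespace FejerRiesz

local notation "conj'" => (starRingEnd ℂ)

def e (t : ℝ) : ℂ := Complex.exp (Complex.I * t)

lemma e_ne (t : ℝ) : e t ≠ 0 := Complex.exp_ne_zero _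

lemma e_k (k : ℕ) (t : ℝ) : Complex.exp (Complex.I * k * t) = e t ^ k := by
  rw [e, ← Complex.exp_nat_mul]; ring_nf

lemma conj_e (t : ℝ) : conj' (e t) = (e t)⁻¹ := by
  rw [e, ← Complex.exp_conj, ← Complex.exp_neg]
  congr 1
  simp [Complex.ext_iff]

lemma hasDerivAt_e (t : ℝ) : HasDerivAt e (Complex.I * e t) t := by
  have h1 : HasDerivAt (fun s : ℝ => Complex.I * s) Complex.I t := by
    simpa using (Complex.ofRealCLM.hasDerivAt (x := t)).const_mul Complex.I
  exact h1.cexp.congr_deriv (by rw [e]; ring)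

lemma trig_eq_laurent (N : ℕ) (y : ℕ → ℂ) (t : ℝ) :
    e t ^ N * ((∑ k ∈ range (N+1), y k * e t ^ k).re : ℂ) =
      ∑ k ∈ range (N+1), y k / 2 * e t ^ (N + k) +
      ∑ k ∈ range (N+1), conj' (y k) / 2 * e t ^ (N - k) := by
  have hconj : conj' (∑ k ∈ range (N+1), y k * e t ^ k)
      = ∑ k ∈ range (N+1), conj' (y k) * ((e t)⁻¹) ^ k := by
    rw [map_sum]; exact sum_congr rfl fun k _ => by rw [map_mul, map_pow, conj_e]
  have hcast : ((∑ k ∈ range (N+1), y k * e t ^ k).re : ℂ)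
      = (∑ k ∈ range (N+1), y k * e t ^ k
          + ∑ k ∈ range (N+1), conj' (y k) * ((e t)⁻¹) ^ k) / 2 := by
    rw [← hconj, Complex.add_conj]; push_cast; ring
  rw [hcast, ← mul_div_assoc, mul_add, mul_sum, mul_sum, add_div, sum_div, sum_div]
  refine congrArg₂ (· + ·) (sum_congr rfl fun k _ => ?_) (sum_congr rfl fun k hk => ?_)
  · rw [pow_add]; ring
  · have hk' : k ≤ N := Nat.lt_succ_iff.mp (mem_range.mp hk)
    have hN : e t ^ N = e t ^ (N - k) * e t ^ k := by rw [← pow_add, Nat.sub_add_cancel hk']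
    have hx : e t ^ k * ((e t)⁻¹) ^ k = 1 := by
      rw [← mul_pow, mul_inv_cancel₀ (e_ne t), one_pow]
    calc e t ^ N * (conj' (y k) * (e t)⁻¹ ^ k) / 2
        = conj' (y k) / 2 * e t ^ (N - k) * (e t ^ k * ((e t)⁻¹) ^ k) := by rw [hN]; ring
      _ = conj' (y k) / 2 * e t ^ (N - k) := by rw [hx, mul_one]

def Yb (b : ℕ → ℂ) (M : ℕ) : ℕ → ℂ := fun k =>
  if k = 0 then ((b M).re : ℂ) else b (M + k) + conj' (b (M - k))

lemma laurent_re (M : ℕ) (b : ℕ → ℂ) (t : ℝ) :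
    (∑ k ∈ range (M+1), Yb b M k * e t ^ k).re
      = (((e t)⁻¹) ^ M * ∑ j ∈ range (M + (M+1)), b j * e t ^ j).re := by
  have h2 : ∀ k, ((e t)⁻¹ ^ M * (b (M + k) * e t ^ (M + k))) = b (M + k) * e t ^ k := by
    intro k
    rw [pow_add]
    have hx : ((e t)⁻¹) ^ M * e t ^ M = 1 := by
      rw [← mul_pow, inv_mul_cancel₀ (e_ne t), one_pow]
    calc ((e t)⁻¹) ^ M * (b (M + k) * (e t ^ M * e t ^ k))
        = b (M + k) * e t ^ k * (((e t)⁻¹) ^ M * e t ^ M) := by ring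
      _ = b (M + k) * e t ^ k := by rw [hx, mul_one]
  have h1 : ∀ k, k < M →
      ((e t)⁻¹ ^ M * (b (M - 1 - k) * e t ^ (M - 1 - k))).re
        = (conj' (b (M - 1 - k)) * e t ^ (k + 1)).re := by
    intro k hk
    have hstep : ((e t)⁻¹ ^ M * (b (M - 1 - k) * e t ^ (M - 1 - k)))
        = b (M - 1 - k) * ((e t)⁻¹) ^ (k + 1) := by
      have hM : ((e t)⁻¹) ^ M = ((e t)⁻¹) ^ (M - 1 - k) * ((e t)⁻¹) ^ (k + 1) := by
        rw [← pow_add]; congr 1; omega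
      rw [hM]
      have hx : ((e t)⁻¹) ^ (M - 1 - k) * e t ^ (M - 1 - k) = 1 := by
        rw [← mul_pow, inv_mul_cancel₀ (e_ne t), one_pow]
      calc ((e t)⁻¹) ^ (M-1-k) * ((e t)⁻¹) ^ (k+1) * (b (M - 1 - k) * e t ^ (M - 1 - k))
          = b (M - 1 - k) * ((e t)⁻¹) ^ (k+1) * (((e t)⁻¹) ^ (M-1-k) * e t ^ (M-1-k)) := by
            ring
        _ = b (M - 1 - k) * ((e t)⁻¹) ^ (k+1) := by rw [hx, mul_one]
    rw [hstep, ← Complex.conj_re, map_mul, map_pow, map_inv₀, conj_e, inv_inv]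
  have hY0 : (Yb b M 0 * e t ^ 0).re = (b M).re := by simp [Yb]
  have hYs : ∀ k, (Yb b M (k + 1) * e t ^ (k + 1)).re
      = (b (M + (k+1)) * e t ^ (k+1)).re + (conj' (b (M - 1 - k)) * e t ^ (k+1)).re := by
    intro k
    have hsub : M - (k + 1) = M - 1 - k := by omega
    simp [Yb, hsub, add_mul]
  have R1 : (((e t)⁻¹) ^ M * ∑ j ∈ range (M + (M+1)), b j * e t ^ j)
      = (∑ j ∈ range M, (e t)⁻¹ ^ M * (b j * e t ^ j))
        + ∑ k ∈ range (M+1), (e t)⁻¹ ^ M * (b (M+k) * e t ^ (M+k)) := by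
    rw [mul_sum, Finset.sum_range_add]
  have R2 : ∑ k ∈ range (M+1), (b (M+k) * e t ^ k).re
      = (∑ i ∈ range M, (b (M+(i+1)) * e t ^ (i+1)).re) + (b M).re := by
    rw [Finset.sum_range_succ']
    simp
  have R3 : ∑ j ∈ range M, ((e t)⁻¹ ^ M * (b j * e t ^ j)).re
      = ∑ k ∈ range M, (conj' (b (M-1-k)) * e t ^ (k+1)).re := by
    rw [← Finset.sum_range_reflect]
    exact sum_congr rfl fun k hk => h1 k (mem_range.mp hk)
  have L1 : ∑ k ∈ range (M+1), (Yb b M k * e t ^ k).re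
      = (∑ k ∈ range M, ((b (M+(k+1)) * e t ^ (k+1)).re
          + (conj' (b (M-1-k)) * e t ^ (k+1)).re)) + (b M).re := by
    rw [Finset.sum_range_succ']
    exact congrArg₂ (· + ·) (sum_congr rfl fun k _ => hYs k) hY0
  rw [Complex.re_sum, L1, R1, Complex.add_re, Complex.re_sum, Complex.re_sum, R3]
  have R2' : ∑ k ∈ range (M+1), ((e t)⁻¹ ^ M * (b (M+k) * e t ^ (M+k))).re
      = (∑ i ∈ range M, (b (M+(i+1)) * e t ^ (i+1)).re) + (b M).re := by
    rw [← R2]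
    exact sum_congr rfl fun k _ => by rw [h2]
  rw [R2', Finset.sum_add_distrib]
  ring

lemma continuous_e : Continuous e :=
  Complex.continuous_exp.comp (continuous_const.mul Complex.continuous_ofReal)

lemma eq_of_e_eq {s t : ℝ} (h : e s = e t) (h2 : |s - t| < 1) : s = t := by
  rw [e, e, Complex.exp_eq_exp_iff_exists_int] at h
  obtain ⟨n, hn⟩ := h
  have h3 : (Complex.I : ℂ) * s = Complex.I * (t + n * (2 * Real.pi)) := by
    rw [hn]; ring
  have h4 : (s : ℂ) = ((t + n * (2 * Real.pi) : ℝ) : ℂ) := by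
    have := mul_left_cancel₀ Complex.I_ne_zero h3
    rw [this]; push_cast; ring
  have h5 : s = t + n * (2 * Real.pi) := Complex.ofReal_injective h4
  have hpi := Real.pi_gt_three
  rcases lt_trichotomy n 0 with hneg | hz | hposn
  · have : (n : ℝ) ≤ -1 := by exact_mod_cast (by omega : n ≤ -1)
    have := abs_lt.mp h2
    nlinarith
  · rw [hz] at h5; push_cast at h5; linarith
  · have : (1 : ℝ) ≤ (n : ℝ) := by exact_mod_cast hposn
    have := abs_lt.mp h2
    nlinarith

lemma nonneg_everywhere {r : ℂ} {f : ℝ → ℝ} (hf : Continuous f)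
    (h : ∀ t, e t ≠ r → 0 ≤ f t) : ∀ t, 0 ≤ f t := by
  intro t
  by_cases hr : e t = r
  · have hev : ∀ᶠ s in 𝓝[≠] t, 0 ≤ f s := by
      have hball : Set.Ioo (t - 1/2) (t + 1/2) ∈ 𝓝 t :=
        Ioo_mem_nhds (by linarith) (by linarith)
      filter_upwards [mem_nhdsWithin_of_mem_nhds hball, self_mem_nhdsWithin] with s hs hne
      refine h s fun hes => hne ?_
      refine eq_of_e_eq (hes.trans hr.symm) ?_
      rw [Set.mem_Ioo] at hs
      rw [abs_lt]; constructor <;> linarith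
    exact ge_of_tendsto ((hf.tendsto t).mono_left nhdsWithin_le_nhds) hev
  · exact h t hr

lemma no_simple_circle_root (N : ℕ) (q : Polynomial ℂ) (T : ℝ → ℝ) (t₀ : ℝ)
    (hT : ∀ t : ℝ, e t ^ N * (T t : ℂ) = ((X - C (e t₀)) * q).eval (e t))
    (hpos : ∀ t, 0 ≤ T t) : q.eval (e t₀) = 0 := by
  by_contra hq
  set z₀ := e t₀ with hz₀
  set L : ℂ := Complex.I * z₀ * (conj' z₀ ^ N * q.eval z₀) with hLdef
  have hL : L ≠ 0 := by
    apply mul_ne_zero (mul_ne_zero Complex.I_ne_zero (e_ne t₀))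
    refine mul_ne_zero (pow_ne_zero _ ?_) hq
    rw [hz₀, conj_e]
    exact inv_ne_zero (e_ne t₀)
  set g : ℝ → ℂ := fun t => slope e t₀ t * (conj' (e t) ^ N * q.eval (e t)) with hgdef
  have hg : Tendsto g (𝓝[≠] t₀) (𝓝 L) := by
    have h1 : Tendsto (slope e t₀) (𝓝[≠] t₀) (𝓝 (Complex.I * z₀)) :=
      hasDerivAt_iff_tendsto_slope.mp (hasDerivAt_e t₀)
    have h2 : Tendsto (fun t => conj' (e t) ^ N * q.eval (e t)) (𝓝[≠] t₀)
        (𝓝 (conj' z₀ ^ N * q.eval z₀)) := by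
      refine Continuous.tendsto ?_ t₀ |>.mono_left nhdsWithin_le_nhds
      exact ((Complex.continuous_conj.comp continuous_e).pow N).mul
        (q.continuous.comp continuous_e)
    exact h1.mul h2
  have hgt : ∀ t, t ≠ t₀ → g t = ((T t / (t - t₀) : ℝ) : ℂ) := by
    intro t ht
    have hz : e t ^ N * (T t : ℂ) = (e t - z₀) * q.eval (e t) := by
      simpa using hT t
    have htt : ((t : ℂ) - (t₀ : ℂ)) ≠ 0 := by
      rw [← Complex.ofReal_sub]
      exact Complex.ofReal_ne_zero.mpr (sub_ne_zero_of_ne ht)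
    rw [hgdef]
    simp only [slope_def_module, Complex.real_smul, conj_e]
    rw [hz₀] at hz
    push_cast
    field_simp [e_ne t]
    rw [mul_comm (e t - e t₀), mul_assoc, ← hz, ← mul_assoc, ← mul_pow, one_div,
      inv_mul_cancel₀ (e_ne t), one_pow, one_mul]
  have him : L.im = 0 := by
    have h1 : Tendsto (fun t => (g t).im) (𝓝[≠] t₀) (𝓝 L.im) :=
      (Complex.continuous_im.tendsto L).comp hg
    have h2 : Tendsto (fun t => (g t).im) (𝓝[≠] t₀) (𝓝 0) := by
      refine Tendsto.congr' ?_ tendsto_const_nhds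
      filter_upwards [self_mem_nhdsWithin] with t ht
      rw [hgt t ht, Complex.ofReal_im]
    exact tendsto_nhds_unique h1 h2
  have hre1 : 0 ≤ L.re := by
    have h1 : Tendsto (fun t => (g t).re) (𝓝[>] t₀) (𝓝 L.re) :=
      ((Complex.continuous_re.tendsto L).comp hg).mono_left
        (nhdsWithin_mono _ fun s hs => ne_of_gt hs)
    refine ge_of_tendsto h1 ?_
    filter_upwards [self_mem_nhdsWithin] with t ht
    rw [hgt t (ne_of_gt ht), Complex.ofReal_re]
    have h3 : (0:ℝ) < t - t₀ := by simpa [sub_pos] using ht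
    exact div_nonneg (hpos t) h3.le
  have hre2 : L.re ≤ 0 := by
    have h1 : Tendsto (fun t => (g t).re) (𝓝[<] t₀) (𝓝 L.re) :=
      ((Complex.continuous_re.tendsto L).comp hg).mono_left
        (nhdsWithin_mono _ fun s hs => ne_of_lt hs)
    refine le_of_tendsto h1 ?_
    filter_upwards [self_mem_nhdsWithin] with t ht
    rw [hgt t (ne_of_lt ht), Complex.ofReal_re]
    have h3 : t - t₀ < 0 := by simpa [sub_neg] using ht
    exact div_nonpos_of_nonneg_of_nonpos (hpos t) h3.le
  exact hL (Complex.ext (le_antisymm hre2 hre1) him)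

/-! ### The associated algebraic polynomial -/

def P (n : ℕ) (y : ℕ → ℂ) : Polynomial ℂ :=
  (∑ k ∈ range (n+1), C (y k / 2) * X ^ (n + k)) +
  ∑ k ∈ range (n+1), C (conj' (y k) / 2) * X ^ (n - k)

lemma pow_cancel {c : ℂ} (hc : c ≠ 0) {a b s : ℕ} (h : a + b = s) :
    c ^ s * (c⁻¹) ^ a = c ^ b := by
  rw [← h, pow_add, mul_comm (c ^ a), mul_assoc, ← mul_pow, mul_inv_cancel₀ hc,
    one_pow, mul_one]

lemma P_eval (n : ℕ) (y : ℕ → ℂ) (z : ℂ) :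
    (P n y).eval z = (∑ k ∈ range (n+1), y k / 2 * z ^ (n + k)) +
      ∑ k ∈ range (n+1), conj' (y k) / 2 * z ^ (n - k) := by
  simp [P, eval_finset_sum]

lemma P_key (n : ℕ) (y : ℕ → ℂ) (t : ℝ) :
    e t ^ n * ((∑ k ∈ range (n+1), y k * e t ^ k).re : ℂ) = (P n y).eval (e t) := by
  rw [P_eval, trig_eq_laurent]

lemma P_coeff (n : ℕ) (y : ℕ → ℂ) (j : ℕ) :
    (P n y).coeff j = (∑ k ∈ range (n+1), if n + k = j then y k / 2 else 0) +
      ∑ k ∈ range (n+1), if n - k = j then conj' (y k) / 2 else 0 := by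
  simp only [P, coeff_add, finset_sum_coeff, coeff_C_mul, coeff_X_pow, mul_ite,
    mul_one, mul_zero]
  congr 1 <;> refine sum_congr rfl fun k _ => ?_ <;>
    simp only [eq_comm]

lemma P_coeff_top (n : ℕ) (y : ℕ → ℂ) (hn : 0 < n) : (P n y).coeff (2*n) = y n / 2 := by
  rw [P_coeff]
  have h1 : ∑ k ∈ range (n+1), (if n + k = 2*n then y k / 2 else 0)
      = ∑ k ∈ range (n+1), (if k = n then y k / 2 else 0) := by
    refine sum_congr rfl fun k hk => ?_
    by_cases h : k = n
    · subst h; rw [if_pos (by omega), if_pos rfl]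
    · rw [if_neg (by omega), if_neg h]
  have h2 : ∑ k ∈ range (n+1), (if n - k = 2*n then conj' (y k) / 2 else 0) = 0 := by
    refine sum_eq_zero fun k hk => ?_
    have := mem_range.mp hk
    rw [if_neg (by omega)]
  rw [h1, h2, Finset.sum_ite_eq' (range (n+1)) n (fun k => y k / 2),
    if_pos (mem_range.mpr (by omega)), add_zero]

lemma P_coeff_bot (n : ℕ) (y : ℕ → ℂ) (hn : 0 < n) :
    (P n y).coeff 0 = conj' (y n) / 2 := by
  rw [P_coeff]
  have h1 : ∑ k ∈ range (n+1), (if n + k = 0 then y k / 2 else 0) = 0 := by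
    refine sum_eq_zero fun k hk => ?_
    rw [if_neg (by omega)]
  have h2 : ∑ k ∈ range (n+1), (if n - k = 0 then conj' (y k) / 2 else 0)
      = ∑ k ∈ range (n+1), (if k = n then conj' (y k) / 2 else 0) := by
    refine sum_congr rfl fun k hk => ?_
    have := mem_range.mp hk
    by_cases h : k = n
    · subst h; rw [if_pos (by omega), if_pos rfl]
    · rw [if_neg (by omega), if_neg h]
  rw [h1, h2, Finset.sum_ite_eq' (range (n+1)) n (fun k => conj' (y k) / 2),
    if_pos (mem_range.mpr (by omega)), zero_add]


lemma P_natDegree_le (n : ℕ) (y : ℕ → ℂ) : (P n y).natDegree ≤ 2*n := by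
  refine (natDegree_add_le _ _).trans (max_le ?_ ?_) <;>
  · refine (natDegree_sum_le _ _).trans ?_
    rw [Finset.fold_max_le]
    refine ⟨by omega, fun k hk => ?_⟩
    have hk' := mem_range.mp hk
    refine (natDegree_C_mul_le _ _).trans ?_
    rw [natDegree_X_pow]
    omega

lemma P_root_inv (n : ℕ) (y : ℕ → ℂ) {r : ℂ} (hr : r ≠ 0)
    (hroot : (P n y).eval r = 0) : (P n y).eval ((conj' r)⁻¹) = 0 := by
  have hc : conj' r ≠ 0 := by simpa using hr
  have h1 : (conj' r) ^ (2*n) * (P n y).eval ((conj' r)⁻¹) = conj' ((P n y).eval r) := by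
    rw [P_eval, P_eval, map_add, map_sum, map_sum, mul_add, mul_sum, mul_sum, add_comm]
    congr 1 <;>
    · refine sum_congr rfl fun k hk => ?_
      have hk' : k ≤ n := Nat.lt_succ_iff.mp (mem_range.mp hk)
      simp only [map_div₀, map_mul, map_pow, map_ofNat, Complex.conj_conj]
      first
        | linear_combination (conj' (y k)/2) *
            pow_cancel hc (show (n-k)+(n+k) = 2*n by omega)
        | linear_combination (y k/2) *
            pow_cancel hc (show (n+k)+(n-k) = 2*n by omega)
  rw [hroot, map_zero] at h1
  exact (mul_eq_zero.mp h1).resolve_left (pow_ne_zero _ hc)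

/-! ### Main induction -/

theorem main : ∀ (n : ℕ) (y : ℕ → ℂ), (y 0).im = 0 →
    (∀ t : ℝ, 0 ≤ (∑ k ∈ range (n+1), y k * e t ^ k).re) →
    ∃ x : ℕ → ℂ, ∀ t : ℝ, (∑ k ∈ range (n+1), y k * e t ^ k).re
      = ‖∑ k ∈ range (n+1), x k * e t ^ k‖ ^ 2 := by
  intro n
  induction n with
  | zero =>
    intro y _ hpos
    refine ⟨fun _ => (Real.sqrt (y 0).re : ℂ), fun t => ?_⟩
    have h1 := hpos 0
    simp only [zero_add, Finset.sum_range_one, pow_zero, mul_one] at h1 ⊢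
    rw [Complex.norm_real, Real.norm_of_nonneg (Real.sqrt_nonneg _), Real.sq_sqrt h1]
  | succ m IH =>
    intro y h0 hpos
    by_cases hy : y (m+1) = 0
    · -- degenerate: degree drops
      have hred : ∀ t, ∑ k ∈ range (m+1+1), y k * e t ^ k
          = ∑ k ∈ range (m+1), y k * e t ^ k := fun t => by
        rw [Finset.sum_range_succ, hy, zero_mul, add_zero]
      obtain ⟨x, hx⟩ := IH y h0 (fun t => by rw [← hred t]; exact hpos t)
      refine ⟨fun k => if k = m+1 then 0 else x k, fun t => ?_⟩
      rw [hred t, hx t]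
      congr 2
      have hxx : ∑ k ∈ range (m+1+1), (if k = m+1 then (0:ℂ) else x k) * e t ^ k
          = ∑ k ∈ range (m+1), x k * e t ^ k := by
        conv_lhs => rw [Finset.sum_range_succ]
        norm_num
        exact sum_congr rfl fun k hk => by
          rw [if_neg (by have := mem_range.mp hk; omega)]
      exact hxx.symm
    · -- main case
      have hNpos : 0 < m + 1 := Nat.succ_pos m
      have hcoefftop : (P (m+1) y).coeff (2*(m+1)) ≠ 0 := by
        rw [P_coeff_top _ _ hNpos]
        simpa using hy
      have hp0 : P (m+1) y ≠ 0 := fun h => hcoefftop (by rw [h, coeff_zero])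
      have hdeg : 0 < (P (m+1) y).degree :=
        lt_of_lt_of_le (by exact_mod_cast (by omega : 0 < 2*(m+1)))
          (le_degree_of_ne_zero hcoefftop)
      obtain ⟨r, hr⟩ := Complex.exists_root hdeg
      have hrroot : (P (m+1) y).eval r = 0 := hr
      have hr0 : r ≠ 0 := by
        intro h
        have h2 := P_coeff_bot (m+1) y hNpos
        rw [coeff_zero_eq_eval_zero, ← h, hrroot] at h2
        exact (by simpa using hy : conj' (y (m+1)) / 2 ≠ 0) h2.symm
      have hcne : conj' r ≠ 0 := by simpa using hr0
      have hr'root : (P (m+1) y).eval ((conj' r)⁻¹) = 0 := P_root_inv (m+1) y hr0 hrroot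
      -- divisibility by the quadratic
      have hdvd : (X - Polynomial.C r) * (X - Polynomial.C ((conj' r)⁻¹)) ∣ P (m+1) y := by
        by_cases hrr : r = (conj' r)⁻¹
        · have habs : ‖r‖ = 1 := by
            have hmc : r * conj' r = 1 := by
              nth_rewrite 1 [hrr]; exact inv_mul_cancel₀ hcne
            rw [Complex.mul_conj] at hmc
            have : Complex.normSq r = 1 := by exact_mod_cast hmc
            rw [Complex.norm_def, this, Real.sqrt_one]
          obtain ⟨θ, hθ⟩ := (Complex.norm_eq_one_iff r).mp habs
          have hrθ : r = e θ := by rw [e, ← hθ]; congr 1; ring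
          have hmul2 : 2 ≤ (P (m+1) y).rootMultiplicity r := by
            by_contra hlt
            push_neg at hlt
            have h1le : 1 ≤ (P (m+1) y).rootMultiplicity r :=
              ((P (m+1) y).rootMultiplicity_pos hp0).mpr hr
            have hm1 : (P (m+1) y).rootMultiplicity r = 1 := by omega
            have hfac := Polynomial.pow_mul_divByMonic_rootMultiplicity_eq (P (m+1) y) r
            have hqne := Polynomial.eval_divByMonic_pow_rootMultiplicity_ne_zero r hp0
            apply hqne
            have hfac1 : (X - Polynomial.C r) *
                ((P (m+1) y) /ₘ ((X - Polynomial.C r) ^ (P (m+1) y).rootMultiplicity r))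
                  = P (m+1) y := by
              conv_rhs => rw [← hfac]
              rw [hm1, pow_one]
            have hT : ∀ t : ℝ, e t ^ (m+1) *
                (((∑ k ∈ range (m+1+1), y k * e t ^ k).re : ℝ) : ℂ)
                = ((X - Polynomial.C (e θ)) *
                    ((P (m+1) y) /ₘ ((X - Polynomial.C r) ^
                      (P (m+1) y).rootMultiplicity r))).eval (e t) := by
              intro t
              rw [← hrθ, hfac1]
              exact P_key (m+1) y t
            have := no_simple_circle_root (m+1) _ _ θ hT hpos
            rw [← hrθ] at this
            exact this
          have hsq : (X - Polynomial.C r) ^ 2 ∣ P (m+1) y :=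
            (Polynomial.le_rootMultiplicity_iff hp0).mp hmul2
          rw [← hrr, ← sq]
          exact hsq
        · have hcop : IsCoprime (X - Polynomial.C r) (X - Polynomial.C ((conj' r)⁻¹)) :=
            Polynomial.isCoprime_X_sub_C_of_isUnit_sub
              (isUnit_iff_ne_zero.mpr (sub_ne_zero_of_ne hrr))
          exact IsCoprime.mul_dvd hcop (Polynomial.dvd_iff_isRoot.mpr hrroot)
            (Polynomial.dvd_iff_isRoot.mpr hr'root)
      obtain ⟨p₁, hp₁⟩ := hdvd
      set B := Polynomial.C (-(conj' r)⁻¹) * p₁ with hB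
      -- degree bookkeeping
      have hp₁ne : p₁ ≠ 0 := by
        rintro rfl
        rw [mul_zero] at hp₁
        exact hp0 hp₁
      have hdegp : (P (m+1) y).natDegree ≤ 2*(m+1) := P_natDegree_le (m+1) y
      have hdeg2 : ((X - Polynomial.C r) * (X - Polynomial.C ((conj' r)⁻¹))).natDegree = 2 := by
        rw [Polynomial.natDegree_mul (X_sub_C_ne_zero r) (X_sub_C_ne_zero _),
          natDegree_X_sub_C, natDegree_X_sub_C]
      have hdegp₁ : p₁.natDegree ≤ 2*m := by
        have hmul := Polynomial.natDegree_mul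
          (mul_ne_zero (X_sub_C_ne_zero r) (X_sub_C_ne_zero ((conj' r)⁻¹))) hp₁ne
        rw [← hp₁, hdeg2] at hmul
        omega
      have hdegB : B.natDegree < m + (m+1) := by
        rw [hB]
        have := (natDegree_C_mul_le (-(conj' r)⁻¹) p₁).trans hdegp₁
        omega
      -- the key complex identity on the circle
      have hTc : ∀ t : ℝ, (((∑ k ∈ range (m+1+1), y k * e t ^ k).re : ℝ) : ℂ)
          = ((‖e t - r‖ ^ 2 : ℝ) : ℂ) * (((e t)⁻¹)^m * B.eval (e t)) := by
        intro t
        have h1 := P_key (m+1) y t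
        rw [hp₁] at h1
        have hzz : e t * (e t)⁻¹ = 1 := mul_inv_cancel₀ (e_ne t)
        have hcc : conj' r * (conj' r)⁻¹ = 1 := mul_inv_cancel₀ hcne
        have hconjz : conj' (e t - r) = (e t)⁻¹ - conj' r := by
          rw [map_sub, conj_e]
        have hsq : ((‖e t - r‖ ^ 2 : ℝ) : ℂ)
            = (e t - r) * ((e t)⁻¹ - conj' r) := by
          rw [← hconjz, Complex.mul_conj]
          norm_cast
          exact (Complex.normSq_eq_norm_sq _).symm
        have hz1 : e t ^ (m+1) * ((e t)⁻¹)^m = e t := by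
          simpa using pow_cancel (e_ne t) (by omega : m + 1 = m + 1)
        refine mul_left_cancel₀ (pow_ne_zero (m+1) (e_ne t)) ?_
        rw [h1, hB, eval_mul, eval_mul, eval_mul, eval_sub, eval_sub, eval_X, eval_C,
          eval_C, eval_C, hsq]
        linear_combination ((e t - r) * ((e t)⁻¹ - conj' r) * (conj' r)⁻¹ *
            p₁.eval (e t)) * hz1
          + ((e t - r) * (conj' r)⁻¹ * p₁.eval (e t)) * hzz
          + (-((e t - r) * (e t) * p₁.eval (e t))) * hcc
      -- the reduced trigonometric polynomial
      have hSeq : ∀ t, (∑ k ∈ range (m+1), Yb B.coeff m k * e t ^ k).re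
          = (((e t)⁻¹)^m * B.eval (e t)).re := by
        intro t
        rw [laurent_re m B.coeff t]
        congr 2
        exact (Polynomial.eval_eq_sum_range' hdegB (e t)).symm
      have hTS : ∀ t, (∑ k ∈ range (m+1+1), y k * e t ^ k).re
          = ‖e t - r‖ ^ 2 * (∑ k ∈ range (m+1), Yb B.coeff m k * e t ^ k).re := by
        intro t
        have h2 := congrArg Complex.re (hTc t)
        rw [Complex.ofReal_re, Complex.re_ofReal_mul] at h2
        rw [h2, hSeq t]
      have hScont : Continuous fun t => (∑ k ∈ range (m+1), Yb B.coeff m k * e t ^ k).re :=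
        Complex.continuous_re.comp (continuous_finset_sum _ fun k _ =>
          continuous_const.mul (continuous_e.pow k))
      have hSpos : ∀ t, 0 ≤ (∑ k ∈ range (m+1), Yb B.coeff m k * e t ^ k).re := by
        refine nonneg_everywhere (r := r) hScont fun t hne => ?_
        have h3 := hpos t
        rw [hTS t] at h3
        have h4 : 0 < ‖e t - r‖ ^ 2 :=
          pow_pos (norm_pos_iff.mpr (sub_ne_zero_of_ne hne)) 2
        nlinarith
      have hY0im : (Yb B.coeff m 0).im = 0 := by simp [Yb]
      obtain ⟨x₁, hx₁⟩ := IH (Yb B.coeff m) hY0im hSpos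
      refine ⟨fun k => (if k = 0 then 0 else x₁ (k-1)) -
        r * (if k = m+1 then 0 else x₁ k), fun t => ?_⟩
      have hXsum : ∑ k ∈ range (m+1+1), ((if k = 0 then 0 else x₁ (k-1)) -
            r * (if k = m+1 then 0 else x₁ k)) * e t ^ k
          = (e t - r) * ∑ k ∈ range (m+1), x₁ k * e t ^ k := by
        have e1 : ∑ k ∈ range (m+1+1), (if k = 0 then (0:ℂ) else x₁ (k-1)) * e t ^ k
            = e t * ∑ k ∈ range (m+1), x₁ k * e t ^ k := by
          rw [Finset.sum_range_succ']
          norm_num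
          rw [Finset.mul_sum]
          exact sum_congr rfl fun k _ => by rw [pow_succ]; ring
        have e2 : ∑ k ∈ range (m+1+1), (if k = m+1 then (0:ℂ) else x₁ k) * e t ^ k
            = ∑ k ∈ range (m+1), x₁ k * e t ^ k := by
          conv_lhs => rw [Finset.sum_range_succ]
          norm_num
          exact sum_congr rfl fun k hk => by
            rw [if_neg (by have := mem_range.mp hk; omega)]
        calc ∑ k ∈ range (m+1+1), ((if k = 0 then (0:ℂ) else x₁ (k-1)) -
              r * (if k = m+1 then 0 else x₁ k)) * e t ^ k
            = (∑ k ∈ range (m+1+1), (if k = 0 then (0:ℂ) else x₁ (k-1)) * e t ^ k) -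
              r * ∑ k ∈ range (m+1+1), (if k = m+1 then (0:ℂ) else x₁ k) * e t ^ k := by
              rw [Finset.mul_sum, ← Finset.sum_sub_distrib]
              exact sum_congr rfl fun k _ => by ring
          _ = (e t - r) * ∑ k ∈ range (m+1), x₁ k * e t ^ k := by
              rw [e1, e2]; ring
      rw [hTS t, hx₁ t, ← mul_pow, ← norm_mul, ← hXsum]

end FejerRiesz

/-- **Fejér's theorem.** A trigonometric polynomial `T(t) = Re ∑_{k=0}^n y_k e^{ikt}`
(with `y_0` real) is nonnegative on ℝ iff there is an algebraic polynomial
`X(z) = ∑_{k=0}^n x_k z^k` with `T(t) = |X(e^{it})|^2` for all real `t`. -/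
theorem fejer_riesz (n : ℕ) (y : ℕ → ℂ) (h0 : (y 0).im = 0) :
    (∀ t : ℝ, 0 ≤ (∑ k ∈ Finset.range (n + 1),
        y k * Complex.exp (Complex.I * k * t)).re) ↔
    ∃ x : ℕ → ℂ, ∀ t : ℝ,
      (∑ k ∈ Finset.range (n + 1), y k * Complex.exp (Complex.I * k * t)).re =
        ‖∑ k ∈ Finset.range (n + 1),
          x k * Complex.exp (Complex.I * k * t)‖ ^ 2 := by
  have hconv : ∀ (z : ℕ → ℂ) (t : ℝ),
      ∑ k ∈ Finset.range (n + 1), z k * Complex.exp (Complex.I * k * t)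
        = ∑ k ∈ Finset.range (n + 1), z k * FejerRiesz.e t ^ k := fun z t =>
    Finset.sum_congr rfl fun k _ => by rw [FejerRiesz.e_k]
  constructor
  · intro hpos
    obtain ⟨x, hx⟩ := FejerRiesz.main n y h0 (fun t => by rw [← hconv y t]; exact hpos t)
    exact ⟨x, fun t => by rw [hconv y t, hconv x t]; exact hx t⟩
  · rintro ⟨x, hx⟩ t
    rw [hx t]
    positivity

end
end

section
/- Let Y be the polynomial with coefficients given by the autocorrelations of the coefficients of X (i.e., Y = Φ(X), so that X·X* = Y* + z^n Y). Define Dis_2(Y) := Dis(Y*(z) + z^n Y(z)). Then Dis_2(Y) = |Dis(X)|^2 · V(X)^2, where V(X) = Res(X, X*) is the Möbius discriminant. -/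
open Polynomial

/-- Reciprocal polynomial `P*(z) = z^n conj(P)(1/z)`. -/
noncomputable def recip (n : ℕ) (P : Polynomial ℂ) : Polynomial ℂ :=
  (P.map (starRingEnd ℂ)).reflect n

/-- Resultant via the root (Cayley) formula. -/
noncomputable def res (P Q : Polynomial ℂ) : ℂ :=
  P.leadingCoeff ^ Q.natDegree * Q.leadingCoeff ^ P.natDegree *
    (P.roots.bind fun a => Q.roots.map fun b => b - a).prod

noncomputable def PP (f : ℂ → ℂ → ℂ) (l : List ℂ) : ℂ :=
  ∏ p ∈ Finset.univ.filter (fun p : Fin l.length × Fin l.length => p.2 < p.1),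
    f (l.get p.1) (l.get p.2)

/-- Discriminant via the root formula. -/
noncomputable def disc (P : Polynomial ℂ) : ℂ :=
  P.leadingCoeff ^ (2 * P.natDegree - 2) *
    ∏ p ∈ Finset.univ.filter
      (fun p : Fin P.roots.toList.length × Fin P.roots.toList.length => p.2 < p.1),
      (P.roots.toList.get p.1 - P.roots.toList.get p.2) ^ 2

lemma disc_eq (P : ℂ[X]) :
    disc P = P.leadingCoeff ^ (2 * P.natDegree - 2) *
      PP (fun b a => (b - a) ^ 2) P.roots.toList := rfl

lemma PP_nil (f : ℂ → ℂ → ℂ) : PP f [] = 1 := by simp [PP]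

lemma PP_cons (f : ℂ → ℂ → ℂ) (a : ℂ) (l : List ℂ) :
    PP f (a :: l) = (l.map fun b => f b a).prod * PP f l := by
  rw [PP, Finset.prod_filter, Fintype.prod_prod_type]
  show (∏ x : Fin (l.length + 1), ∏ y : Fin (l.length + 1),
      if y < x then f ((a :: l).get x) ((a :: l).get y) else 1) = _
  rw [Fin.prod_univ_succ]
  simp only [Fin.prod_univ_succ, Fin.succ_lt_succ_iff, List.get_cons_succ,
    List.get_cons_zero, Fin.succ_pos, if_true, if_pos, Fin.not_lt_zero, if_false,
    lt_self_iff_false, Finset.prod_const_one, one_mul, Finset.prod_mul_distrib]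
  rw [PP, Finset.prod_filter, Fintype.prod_prod_type, ← Fin.prod_univ_fun_getElem l (fun b => f b a)]
  rfl

lemma PP_perm (f : ℂ → ℂ → ℂ) (hf : ∀ x y, f x y = f y x) {l₁ l₂ : List ℂ}
    (h : l₁.Perm l₂) : PP f l₁ = PP f l₂ := by
  induction h with
  | nil => rfl
  | cons a h ih => rw [PP_cons, PP_cons, ih, (h.map _).prod_eq]
  | swap x y l =>
      rw [PP_cons, PP_cons, PP_cons, PP_cons]
      simp only [List.map_cons, List.prod_cons]
      rw [hf x y]; ring
  | trans _ _ ih1 ih2 => rw [ih1, ih2]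

lemma PP_append (f : ℂ → ℂ → ℂ) (l₁ l₂ : List ℂ) :
    PP f (l₁ ++ l₂) = PP f l₁ * PP f l₂ *
      (l₁.map fun a => (l₂.map fun b => f b a).prod).prod := by
  induction l₁ with
  | nil => simp [PP_nil]
  | cons a l₁ ih =>
      rw [List.cons_append, PP_cons, PP_cons, ih]
      simp only [List.map_append, List.prod_append, List.map_cons, List.prod_cons]
      ring

lemma PP_map (f : ℂ → ℂ → ℂ) (g : ℂ → ℂ) (l : List ℂ) :
    PP f (l.map g) = PP (fun x y => f (g x) (g y)) l := by
  induction l with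
  | nil => rfl
  | cons a l ih => rw [List.map_cons, PP_cons, PP_cons, ih, List.map_map]; rfl

lemma PP_congr (f g : ℂ → ℂ → ℂ) (l : List ℂ)
    (h : ∀ x ∈ l, ∀ y ∈ l, f x y = g x y) : PP f l = PP g l := by
  induction l with
  | nil => rfl
  | cons a l ih =>
      rw [PP_cons, PP_cons, ih fun x hx y hy => h x (List.mem_cons_of_mem _ hx) y
        (List.mem_cons_of_mem _ hy)]
      congr 1
      exact congrArg _ (List.map_congr_left fun b hb =>
        h b (List.mem_cons_of_mem _ hb) a (List.mem_cons_self))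

lemma PP_mul_distrib (f g : ℂ → ℂ → ℂ) (l : List ℂ) :
    PP (fun x y => f x y * g x y) l = PP f l * PP g l := by
  simp [PP, Finset.prod_mul_distrib]

lemma PP_conj (f : ℂ → ℂ → ℂ) (l : List ℂ) :
    PP (fun x y => (starRingEnd ℂ) (f x y)) l = (starRingEnd ℂ) (PP f l) := by
  simp [PP, map_prod]

lemma prod_map_mul_const (a : ℂ) (l : List ℂ) :
    (l.map fun b => b * a).prod = l.prod * a ^ l.length := by
  induction l with
  | nil => simp
  | cons x l ih => simp [ih]; ring

lemma PP_mul (l : List ℂ) : PP (fun x y => x * y) l = l.prod ^ (l.length - 1) := by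
  induction l with
  | nil => simp [PP_nil]
  | cons a l ih =>
      rw [PP_cons, ih, prod_map_mul_const]
      simp only [List.prod_cons, List.length_cons, Nat.add_sub_cancel]
      cases l with
      | nil => simp
      | cons x t => rw [List.length_cons, Nat.succ_sub_one, mul_pow]; ring

lemma prod_map_sq (l : List ℂ) (g : ℂ → ℂ) :
    (l.map fun b => (g b) ^ 2).prod = (l.map g).prod ^ 2 := by
  induction l with
  | nil => simp
  | cons x t ih => simp [ih]; ring

lemma prod_map_neg (l : List ℂ) :
    (l.map fun a => -a).prod = (-1) ^ l.length * l.prod := by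
  induction l with
  | nil => simp
  | cons x t ih => simp [ih]; ring

lemma prod_map_inv (l : List ℂ) :
    (l.map fun a => a⁻¹).prod = (l.prod)⁻¹ := by
  induction l with
  | nil => simp
  | cons x t ih => simp [ih, mul_inv]; ring

lemma reflect_linear (a : ℂ) (ha : a ≠ 0) :
    reflect 1 (X - C a) = C (-a) * (X - C a⁻¹) := by
  rw [reflect_sub]
  have h1 : reflect 1 (X : ℂ[X]) = 1 := by
    rw [← pow_one (X : ℂ[X]), reflect_monomial]
    simp
  have h2 : reflect 1 (C a) = C a * X := by
    rw [← mul_one (C a), ← pow_zero (X : ℂ[X]), reflect_C_mul_X_pow]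
    simp
  rw [h1, h2, mul_sub, ← C_mul]
  rw [show (-a * a⁻¹ : ℂ) = -1 by rw [neg_mul, mul_inv_cancel₀ ha]]
  simp only [C_neg, C_1]
  ring

lemma natDegree_linear_prod (s : List ℂ) :
    ((s.map fun a => X - C a).prod : ℂ[X]).natDegree ≤ s.length := by
  refine le_trans (natDegree_list_prod_le _) ?_
  rw [List.map_map]
  refine le_trans (List.sum_le_card_nsmul _ 1 ?_) (by simp)
  intro x hx
  simp only [List.mem_map, Function.comp] at hx
  obtain ⟨a, _, rfl⟩ := hx
  simp [natDegree_X_sub_C]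

lemma reflect_prod_linear (s : List ℂ) (hs : ∀ a ∈ s, a ≠ 0) :
    reflect s.length ((s.map fun a => X - C a).prod : ℂ[X])
      = C ((s.map fun a => -a).prod) * (s.map fun a => X - C a⁻¹).prod := by
  induction s with
  | nil =>
      simp only [List.map_nil, List.prod_nil, List.length_nil]
      rw [← C_1, reflect_C, C_1]
      simp
  | cons a t ih =>
      have hlen : (a :: t).length = 1 + t.length := by simp [Nat.add_comm]
      rw [List.map_cons, List.prod_cons, hlen,
        reflect_mul (X - C a) _ (by simp [natDegree_X_sub_C]) (natDegree_linear_prod t),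
        ih (fun x hx => hs x (List.mem_cons_of_mem _ hx)),
        reflect_linear a (hs a (List.mem_cons_self))]
      simp only [List.map_cons, List.prod_cons, C_mul]
      ring

lemma exists_list (P : ℂ[X]) :
    ∃ L : List ℂ, (↑L : Multiset ℂ) = P.roots ∧ L.length = P.natDegree ∧
      P = C P.leadingCoeff * (L.map fun a => X - C a).prod := by
  refine ⟨P.roots.toList, P.roots.coe_toList, ?_, ?_⟩
  · rw [Multiset.length_toList]
    exact splits_iff_card_roots.mp (IsAlgClosed.splits P)
  · have h := (IsAlgClosed.splits P).eq_prod_roots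
    rw [← P.roots.coe_toList, Multiset.map_coe, Multiset.prod_coe] at h
    exact h

/-- If `Y = Φ(X)`, i.e. `X·X* = Y* + z^n Y`, then the second discriminant
`Dis₂(Y) = Dis(Y* + z^n Y)` satisfies `Dis₂(Y) = |Dis(X)|²·V(X)²` where
`V(X) = Res(X, X*)`. -/
theorem disc2_eq (n : ℕ) (hn : 1 ≤ n) (Xp Y : Polynomial ℂ)
    (hdeg : Xp.natDegree = n) (h0 : Xp.coeff 0 ≠ 0)
    (hY : recip n Y + X ^ n * Y = Xp * recip n Xp) :
    disc (recip n Y + X ^ n * Y) =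
      (Complex.normSq (disc Xp) : ℂ) * res Xp (recip n Xp) ^ 2 := by
  rw [hY]
  set σ := starRingEnd ℂ with hσ
  have hXp0 : Xp ≠ 0 := fun h => h0 (by simp [h])
  set c := Xp.leadingCoeff with hc
  have hc0 : c ≠ 0 := leadingCoeff_ne_zero.mpr hXp0
  obtain ⟨LX, hLXcoe, hLXlen, hXfact⟩ := exists_list Xp
  have hLXlen' : LX.length = n := by rw [hLXlen, hdeg]
  have hrootsne : ∀ a ∈ Xp.roots, a ≠ 0 := by
    intro a ha h
    subst h
    have h1 : Xp.IsRoot 0 := isRoot_of_mem_roots ha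
    rw [IsRoot.def, ← coeff_zero_eq_eval_zero] at h1
    exact h0 h1
  have hLXne : ∀ a ∈ LX, a ≠ 0 := fun a ha =>
    hrootsne a (hLXcoe ▸ Multiset.mem_coe.mpr ha)
  -- the conjugated polynomial
  set Q := Xp.map σ with hQdef
  have hQ0 : Q ≠ 0 :=
    (Polynomial.map_ne_zero_iff (RingHom.injective σ)).mpr hXp0
  have hQdeg : Q.natDegree = n := by rw [hQdef, natDegree_map, hdeg]
  have hQlc : Q.leadingCoeff = σ c := by rw [hQdef, leadingCoeff_map, hc]
  obtain ⟨LQ, hLQcoe, hLQlen, hQfact⟩ := exists_list Q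
  have hLQlen' : LQ.length = n := by rw [hLQlen, hQdeg]
  have hQroots : Q.roots = Xp.roots.map σ :=
    (roots_map_of_injective_of_card_eq_natDegree (RingHom.injective σ)
      (splits_iff_card_roots.mp (IsAlgClosed.splits Xp))).symm
  have hperm : LQ.Perm (LX.map σ) := by
    rw [← Multiset.coe_eq_coe, hLQcoe, hQroots, ← hLXcoe, Multiset.map_coe]
  have hLQne : ∀ a ∈ LQ, a ≠ 0 := by
    intro a ha
    obtain ⟨b, hb, rfl⟩ := List.mem_map.mp (hperm.mem_iff.mp ha)
    exact fun h => hLXne b hb (by simpa [hσ] using h)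
  set pQ := LQ.prod with hpQ
  have hpQ0 : pQ ≠ 0 := List.prod_ne_zero (fun h => hLQne 0 h rfl)
  set k := σ c * (LQ.map fun a => -a).prod with hk
  have hk0 : k ≠ 0 := by
    rw [hk, prod_map_neg]
    exact mul_ne_zero (by simpa [hσ] using hc0)
      (mul_ne_zero (pow_ne_zero _ (by norm_num)) hpQ0)
  set LR := LQ.map (fun a => a⁻¹) with hLRdef
  have hrecip : recip n Xp = C k * (((↑LR : Multiset ℂ)).map fun a => X - C a).prod := by
    rw [recip, ← hQdef]
    conv_lhs => rw [hQfact]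
    rw [reflect_C_mul, hQlc, ← hLQlen',
      reflect_prod_linear LQ hLQne, ← mul_assoc, ← C_mul, ← hk]
    rw [Multiset.map_coe, Multiset.prod_coe, hLRdef, List.map_map]
    rfl
  set R := recip n Xp with hRdef
  have hRroots : R.roots = (↑LR : Multiset ℂ) := by
    rw [hrecip, roots_C_mul _ hk0, roots_multiset_prod_X_sub_C]
  have hmonic : ((((↑LR : Multiset ℂ))).map fun a => X - C a).prod.Monic :=
    monic_multiset_prod_of_monic _ _ fun a _ => monic_X_sub_C a
  have hRlc : R.leadingCoeff = k := by
    rw [hrecip, leadingCoeff_mul, leadingCoeff_C, hmonic.leadingCoeff, mul_one]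
  have hR0 : R ≠ 0 := fun h => hk0 (by rw [← hRlc, h, leadingCoeff_zero])
  have hRdeg : R.natDegree = n := by
    rw [hrecip, natDegree_C_mul hk0, natDegree_multiset_prod_X_sub_C_eq_card]
    simp [hLRdef, hLQlen']
  -- permutations of root lists
  have hpermX : Xp.roots.toList.Perm LX :=
    Multiset.coe_eq_coe.mp (by rw [Multiset.coe_toList, hLXcoe])
  have hpermR : R.roots.toList.Perm LR :=
    Multiset.coe_eq_coe.mp (by rw [Multiset.coe_toList, hRroots])
  have hfsym : ∀ x y : ℂ, (fun b a => (b - a) ^ 2) x y = (fun b a => (b - a) ^ 2) y x :=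
    fun x y => by simp only []; ring
  -- disc R = conj (disc Xp)
  have hPPLQ : PP (fun b a => (b - a) ^ 2) R.roots.toList
      = PP (fun b a => (b - a) ^ 2) LQ * ((pQ⁻¹) ^ 2) ^ (n - 1) := by
    rw [PP_perm _ hfsym hpermR, hLRdef, PP_map]
    have e3 : PP (fun x y => (x⁻¹ - y⁻¹) ^ 2) LQ
        = PP (fun x y => (x - y) ^ 2 * ((x⁻¹) ^ 2 * (y⁻¹) ^ 2)) LQ := by
      refine PP_congr _ _ _ fun x hx y hy => ?_
      have hx0 := hLQne x hx; have hy0 := hLQne y hy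
      field_simp
      ring
    rw [e3, PP_mul_distrib]
    congr 1
    rw [← PP_map (fun x y => x * y) (fun a => (a⁻¹) ^ 2) LQ, PP_mul, List.length_map,
      hLQlen', prod_map_sq, prod_map_inv, hpQ]
  have hdiscR : disc R = σ (disc Xp) := by
    rw [disc_eq, disc_eq, hRlc, hRdeg, hdeg, ← hc]
    rw [hPPLQ]
    have hkpow : k ^ (2 * n - 2) = (σ c) ^ (2 * n - 2) * pQ ^ (2 * n - 2) := by
      rw [hk, prod_map_neg, hLQlen', ← hpQ, mul_pow, mul_pow, ← pow_mul]
      have heven : Even (n * (2 * n - 2)) := by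
        rcases Nat.even_or_odd n with h | h
        · exact h.mul_right _
        · exact Even.mul_left ⟨n - 1, by omega⟩ _
      rw [heven.neg_one_pow]
      ring
    have hcancel : pQ ^ (2 * n - 2) * ((pQ⁻¹) ^ 2) ^ (n - 1) = 1 := by
      rw [← pow_mul, show 2 * (n - 1) = 2 * n - 2 by omega, inv_pow,
        mul_inv_cancel₀ (pow_ne_zero _ hpQ0)]
    have hconjPP : PP (fun b a => (b - a) ^ 2) LQ
        = σ (PP (fun b a => (b - a) ^ 2) Xp.roots.toList) :=
      calc PP (fun b a => (b - a) ^ 2) LQ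
          = PP (fun b a => (b - a) ^ 2) (LX.map σ) := PP_perm _ hfsym hperm
        _ = PP (fun x y => (σ x - σ y) ^ 2) LX := PP_map _ _ _
        _ = PP (fun x y => σ ((x - y) ^ 2)) LX :=
            PP_congr _ _ _ (fun x _ y _ => by simp)
        _ = PP (fun x y => σ ((x - y) ^ 2)) Xp.roots.toList :=
            PP_perm _ (fun x y => congrArg σ (by ring)) hpermX.symm
        _ = σ (PP (fun b a => (b - a) ^ 2) Xp.roots.toList) := PP_conj _ _
    rw [map_mul, map_pow, ← hconjPP, hkpow]
    linear_combination (σ c ^ (2 * n - 2) * PP (fun b a => (b - a) ^ 2) LQ) * hcancel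
  have hW0 : Xp * R ≠ 0 := mul_ne_zero hXp0 hR0
  have hWlc : (Xp * R).leadingCoeff = c * k := by rw [leadingCoeff_mul, ← hc, hRlc]
  have hWdeg : (Xp * R).natDegree = 2 * n := by
    rw [natDegree_mul hXp0 hR0, hdeg, hRdeg]; ring
  have hWroots : (Xp * R).roots = (↑(LX ++ LR) : Multiset ℂ) := by
    rw [roots_mul hW0, hRroots, ← hLXcoe, ← Multiset.coe_add]
  have hpermW : (Xp * R).roots.toList.Perm (LX ++ LR) :=
    Multiset.coe_eq_coe.mp (by rw [Multiset.coe_toList, hWroots])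
  have hres : res Xp R = c ^ n * k ^ n *
      (LX.map fun a => (LR.map fun b => b - a).prod).prod := by
    rw [res, hRlc, hRdeg, hdeg, ← hc, ← hLXcoe, hRroots]
    congr 1
    rw [Multiset.prod_bind, Multiset.map_coe, Multiset.prod_coe]
    congr 1
  have hcross : (LX.map fun a => (LR.map fun b => (b - a) ^ 2).prod).prod
      = ((LX.map fun a => (LR.map fun b => b - a).prod).prod) ^ 2 := by
    rw [← prod_map_sq]
    congr 1
    exact List.map_congr_left fun a _ => prod_map_sq LR (fun b => b - a)
  rw [show ((Complex.normSq (disc Xp) : ℝ) : ℂ) = disc Xp * σ (disc Xp) from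
    (Complex.mul_conj _).symm, ← hdiscR]
  rw [disc_eq (Xp * R), hWlc, hWdeg, disc_eq Xp, ← hc, hdeg, disc_eq R, hRlc, hRdeg,
    PP_perm _ hfsym hpermW, PP_append, PP_perm _ hfsym hpermX, PP_perm _ hfsym hpermR,
    hres, hcross]
  rw [show 2 * (2 * n) - 2 = (2 * n - 2) + 2 * n by omega, pow_add, mul_pow]
  ring
end

section
/- The polynomial ∏_{1 ≤ j < i ≤ m} (z_i - z_j)^2 (the discriminant of the variables z_1, ..., z_m) admits no nontrivial factorization into a product of two symmetric polynomials in ℂ[z_1, ..., z_m]: if ∏_{i>j}(z_i - z_j)^2 = A·B with A, B symmetric polynomials, then A or B is a constant. -/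
open MvPolynomial Finset

-- helper: perm sending a↦c, b↦d
lemma exists_perm_pair {α : Type*} [DecidableEq α] {a b c d : α} (hab : a ≠ b) (hcd : c ≠ d) :
    ∃ σ : Equiv.Perm α, σ a = c ∧ σ b = d := by
  set σ₁ := Equiv.swap a c with hσ₁
  have h1 : σ₁ a = c := Equiv.swap_apply_left a c
  have hb'c : σ₁ b ≠ c := fun h => hab (σ₁.injective (h.trans h1.symm)).symm
  refine ⟨σ₁.trans (Equiv.swap (σ₁ b) d), ?_, ?_⟩
  · simp only [Equiv.trans_apply, h1]
    exact Equiv.swap_apply_of_ne_of_ne hb'c.symm hcd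
  · simp only [Equiv.trans_apply]
    exact Equiv.swap_apply_left _ _

-- units are constants
lemma isUnit_eq_C : ∀ {n : ℕ} {f : MvPolynomial (Fin n) ℂ}, IsUnit f → ∃ c : ℂ, f = C c := by
  intro n
  induction n with
  | zero => intro f _; exact ⟨_, (eq_C_of_isEmpty f)⟩
  | succ n ih =>
    intro f hf
    have h2 : IsUnit (finSuccEquiv ℂ n f) := hf.map _
    obtain ⟨r, hr, hrf⟩ := Polynomial.isUnit_iff.mp h2
    obtain ⟨c, rfl⟩ := ih hr
    refine ⟨c, ?_⟩
    have : (finSuccEquiv ℂ n).symm (Polynomial.C (C c)) = C c := by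
      have := congrArg (fun g : ℂ →+* MvPolynomial (Fin n.succ) ℂ => g c) (finSuccEquiv_comp_C_eq_C (R := ℂ) n)
      simpa using this
    rw [← this, hrf, AlgEquiv.symm_apply_apply]

lemma prime_X_zero (n : ℕ) : Prime (X 0 : MvPolynomial (Fin (n+1)) ℂ) := by
  rw [← MulEquiv.prime_iff (finSuccEquiv ℂ n).toMulEquiv]
  have : (finSuccEquiv ℂ n).toMulEquiv (X 0) = Polynomial.X := by
    simpa using finSuccEquiv_X_zero (R := ℂ) (n := n)
  rw [this]
  exact Polynomial.prime_X

lemma prime_X_var {n : ℕ} (i : Fin (n+1)) : Prime (X i : MvPolynomial (Fin (n+1)) ℂ) := by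
  have h := prime_X_zero n
  rw [← MulEquiv.prime_iff (renameEquiv ℂ (Equiv.swap 0 i)).toMulEquiv] at h
  have : (renameEquiv ℂ (Equiv.swap 0 i)).toMulEquiv (X 0) = (X i : MvPolynomial (Fin (n+1)) ℂ) := by
    simpa using rename_X (Equiv.swap 0 i : Fin (n+1) → Fin (n+1)) 0
  rwa [this] at h

lemma prime_X_sub_X {n : ℕ} {i j : Fin (n+1)} (hij : i ≠ j) :
    Prime (X i - X j : MvPolynomial (Fin (n+1)) ℂ) := by
  classical
  let f : MvPolynomial (Fin (n+1)) ℂ →ₐ[ℂ] MvPolynomial (Fin (n+1)) ℂ :=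
    aeval (fun k => if k = i then X i - X j else X k)
  let g : MvPolynomial (Fin (n+1)) ℂ →ₐ[ℂ] MvPolynomial (Fin (n+1)) ℂ :=
    aeval (fun k => if k = i then X i + X j else X k)
  have hfg : f.comp g = AlgHom.id ℂ _ := by
    apply algHom_ext
    intro k
    by_cases hk : k = i
    · subst hk
      simp [f, g, hij.symm, if_neg (Ne.symm hij)]
    · simp [f, g, hk]
  have hgf : g.comp f = AlgHom.id ℂ _ := by
    apply algHom_ext
    intro k
    by_cases hk : k = i
    · subst hk
      simp [f, g, hij.symm, if_neg (Ne.symm hij)]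
    · simp [f, g, hk]
  let e : MvPolynomial (Fin (n+1)) ℂ ≃ₐ[ℂ] MvPolynomial (Fin (n+1)) ℂ :=
    AlgEquiv.ofAlgHom f g hfg hgf
  have h := prime_X_var (n := n) i
  rw [← MulEquiv.prime_iff e.toMulEquiv] at h
  have : e.toMulEquiv (X i) = (X i - X j : MvPolynomial (Fin (n+1)) ℂ) := by
    show f (X i) = _
    simp [f]
  rwa [this] at h

-- product of pairwise non-dividing primes divides
lemma prod_primes_dvd_of_dvd {R : Type*} [CommMonoidWithZero R] [IsCancelMulZero R] {ι : Type*} [DecidableEq ι]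
    (s : Finset ι) (f : ι → R) (hp : ∀ i ∈ s, Prime (f i))
    (hnd : ∀ i ∈ s, ∀ j ∈ s, i ≠ j → ¬ f i ∣ f j) {A : R} (hd : ∀ i ∈ s, f i ∣ A) :
    (∏ i ∈ s, f i) ∣ A := by
  induction s using Finset.induction_on with
  | empty => simpa using one_dvd A
  | @insert x s' hx ih =>
    obtain ⟨A', hA'⟩ := ih (fun i hi => hp i (mem_insert_of_mem hi))
      (fun i hi j hj hij => hnd i (mem_insert_of_mem hi) j (mem_insert_of_mem hj) hij)
      (fun i hi => hd i (mem_insert_of_mem hi))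
    have hpx : Prime (f x) := hp x (mem_insert_self x s')
    have hx_not : ¬ f x ∣ ∏ i ∈ s', f i := by
      rw [Prime.dvd_finset_prod_iff hpx]
      rintro ⟨i, hi, hdvd⟩
      exact hnd x (mem_insert_self x s') i (mem_insert_of_mem hi)
        (fun h => hx (h ▸ hi)) hdvd
    have : f x ∣ (∏ i ∈ s', f i) * A' := hA' ▸ hd x (mem_insert_self x s')
    rcases hpx.dvd_or_dvd this with h | h
    · exact absurd h hx_not
    · obtain ⟨A'', rfl⟩ := h
      rw [prod_insert hx, hA']
      exact ⟨A'', by rw [← mul_assoc, mul_comm (∏ i ∈ s', f i) (f x)]⟩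

lemma not_dvd_X_sub_X {m : ℕ} {i j k l : Fin m} (hji : j < i) (hlk : l < k)
    (hne : (i, j) ≠ (k, l)) :
    ¬ ((X i - X j : MvPolynomial (Fin m) ℂ) ∣ X k - X l) := by
  classical
  intro hdvd
  -- choose an evaluation point
  by_cases hk : k ≠ i ∧ k ≠ j
  · -- v = indicator of k
    set v : Fin m → ℂ := fun t => if t = k then 1 else 0 with hv
    have h0 : eval v (X i - X j) = 0 := by
      simp [hv, (Ne.symm hk.1 : i ≠ k), (Ne.symm hk.2 : j ≠ k)]
    have h1 : eval v (X k - X l) = 1 := by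
      simp [hv, (hlk.ne : l ≠ k)]
    have := map_dvd (eval v) hdvd
    rw [h0, h1] at this
    simpa using this
  · -- k = i or k = j; then l ∉ {i, j}
    push_neg at hk
    have hli : l ≠ i ∧ l ≠ j := by
      rcases Classical.em (k = i) with rfl | hki
      · refine ⟨(hlk.ne : l ≠ k), fun hlj => hne ?_⟩
        subst hlj; rfl
      · have hkj : k = j := hk hki
        subst hkj
        constructor
        · intro hli; subst hli; exact absurd hji (not_lt_of_gt hlk)
        · exact (hlk.ne : l ≠ k)
    set v : Fin m → ℂ := fun t => if t = l then 1 else 0 with hv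
    have h0 : eval v (X i - X j) = 0 := by
      simp [hv, (Ne.symm hli.1 : i ≠ l), (Ne.symm hli.2 : j ≠ l)]
    have h1 : eval v (X k - X l) = -1 := by
      simp [hv, (hlk.ne' : k ≠ l)]
    have := map_dvd (eval v) hdvd
    rw [h0, h1] at this
    rw [zero_dvd_iff] at this
    exact absurd this (by norm_num)

-- evaluation of the pair-product as a Vandermonde determinant
lemma prod_pairs_eq_det {m : ℕ} (w : Fin m → ℂ) :
    ∏ p ∈ univ.filter (fun p : Fin m × Fin m => p.2 < p.1), (w p.1 - w p.2)
      = (Matrix.vandermonde w).det := by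
  rw [Matrix.det_vandermonde]
  rw [← Finset.prod_sigma (univ : Finset (Fin m)) (fun i => Ioi i)
    (fun p => w p.2 - w p.1)]
  refine Finset.prod_bij' (fun p _ => (⟨p.2, p.1⟩ : (_ : Fin m) × Fin m))
    (fun x _ => (x.2, x.1)) ?_ ?_ ?_ ?_ ?_
  · rintro ⟨a, b⟩ hp
    simp only [mem_filter, mem_univ, true_and] at hp
    simp [mem_sigma, mem_Ioi, hp]
  · rintro ⟨a, b⟩ hx
    simp only [mem_sigma, mem_univ, mem_Ioi, true_and] at hx
    simp [hx]
  · rintro ⟨a, b⟩ _; rfl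
  · rintro ⟨a, b⟩ _; rfl
  · rintro ⟨a, b⟩ _; rfl

/-- The squared Vandermonde `∏_{j<i}(z_i - z_j)²` admits no nontrivial factorization
into two symmetric polynomials: if it equals `A·B` with `A`, `B` symmetric, then `A`
or `B` is a constant. -/
theorem vandermonde_sq_no_symmetric_factorization (m : ℕ)
    (A B : MvPolynomial (Fin m) ℂ)
    (hA : A.IsSymmetric) (hB : B.IsSymmetric)
    (h : A * B = ∏ p ∈ Finset.univ.filter (fun p : Fin m × Fin m => p.2 < p.1),
      (MvPolynomial.X p.1 - MvPolynomial.X p.2) ^ 2) :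
    (∃ c : ℂ, A = MvPolynomial.C c) ∨ ∃ c : ℂ, B = MvPolynomial.C c := by
  classical
  rcases Nat.lt_or_ge m 2 with hm | hm
  · -- trivial case: no pairs
    have hSempty : Finset.univ.filter (fun p : Fin m × Fin m => p.2 < p.1) = ∅ := by
      rw [Finset.filter_eq_empty_iff]
      rintro ⟨a, b⟩ -
      intro hba
      have h1 : (b : ℕ) < (a : ℕ) := hba
      have := a.2
      omega
    rw [hSempty, prod_empty] at h
    exact Or.inl (isUnit_eq_C (IsUnit.of_mul_eq_one (a := A) B h))
  obtain ⟨k, rfl⟩ : ∃ k, m = k + 2 := ⟨m - 2, by omega⟩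
  set S : Finset (Fin (k+2) × Fin (k+2)) :=
    Finset.univ.filter (fun p => p.2 < p.1) with hS
  have hprime : ∀ p ∈ S, Prime (X p.1 - X p.2 : MvPolynomial (Fin (k+2)) ℂ) := by
    intro p hp
    rw [hS, mem_filter] at hp
    exact prime_X_sub_X (n := k+1) hp.2.ne'
  have hnd : ∀ p ∈ S, ∀ p' ∈ S, p ≠ p' →
      ¬ ((X p.1 - X p.2 : MvPolynomial (Fin (k+2)) ℂ) ∣ X p'.1 - X p'.2) := by
    intro p hp p' hp' hne
    rw [hS, mem_filter] at hp hp'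
    exact not_dvd_X_sub_X hp.2 hp'.2 (by
      intro hcontra
      exact hne (Prod.ext (congrArg Prod.fst hcontra) (congrArg Prod.snd hcontra)))
  have hABne : A * B ≠ 0 := by
    rw [h]
    refine prod_ne_zero_iff.mpr fun p hp => pow_ne_zero _ (hprime p hp).ne_zero
  have hA0 : A ≠ 0 := left_ne_zero_of_mul hABne
  have hB0 : B ≠ 0 := right_ne_zero_of_mul hABne
  have hdvd_sym : ∀ (P : MvPolynomial (Fin (k+2)) ℂ), P.IsSymmetric →
      ∀ p ∈ S, ∀ p' ∈ S, ((X p.1 - X p.2 : MvPolynomial (Fin (k+2)) ℂ) ∣ P) →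
        (X p'.1 - X p'.2 : MvPolynomial (Fin (k+2)) ℂ) ∣ P := by
    intro P hP p hp p' hp' hdvd
    rw [hS, mem_filter] at hp hp'
    obtain ⟨σ, hσ1, hσ2⟩ := exists_perm_pair hp.2.ne' hp'.2.ne'
    have h2 : rename σ (X p.1 - X p.2) = (X p'.1 - X p'.2 : MvPolynomial (Fin (k+2)) ℂ) := by
      rw [map_sub, rename_X, rename_X, hσ1, hσ2]
    have h3 := map_dvd (rename (σ : Fin (k+2) → Fin (k+2))) hdvd
    rwa [h2, hP σ] at h3
  have key : ∀ (P : MvPolynomial (Fin (k+2)) ℂ), P.IsSymmetric → P ≠ 0 → ¬ IsUnit P →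
      P ∣ A * B → (∏ p ∈ S, (X p.1 - X p.2 : MvPolynomial (Fin (k+2)) ℂ)) ∣ P := by
    intro P hPsym hP0 hPu hPdvd
    obtain ⟨r, hr_irr, hr_dvd⟩ := WfDvdMonoid.exists_irreducible_factor hPu hP0
    have hr_prime : Prime r := (UniqueFactorizationMonoid.irreducible_iff_prime).mp hr_irr
    have hrAB : r ∣ A * B := hr_dvd.trans hPdvd
    rw [h] at hrAB
    obtain ⟨p, hp, hrp⟩ := (Prime.dvd_finset_prod_iff hr_prime _).mp hrAB
    have hrq : r ∣ (X p.1 - X p.2 : MvPolynomial (Fin (k+2)) ℂ) :=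
      hr_prime.dvd_of_dvd_pow hrp
    have hassoc : Associated r (X p.1 - X p.2 : MvPolynomial (Fin (k+2)) ℂ) :=
      hr_prime.associated_of_dvd (hprime p hp) hrq
    have hqP : (X p.1 - X p.2 : MvPolynomial (Fin (k+2)) ℂ) ∣ P :=
      hassoc.symm.dvd.trans hr_dvd
    exact prod_primes_dvd_of_dvd S _ hprime hnd
      (fun p' hp' => hdvd_sym P hPsym p hp p' hp' hqP)
  by_cases hAu : IsUnit A
  · exact Or.inl (isUnit_eq_C hAu)
  by_cases hBu : IsUnit B
  · exact Or.inr (isUnit_eq_C hBu)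
  exfalso
  obtain ⟨A₁, hA1⟩ := key A hA hA0 hAu (dvd_mul_right A B)
  obtain ⟨B₁, hB1⟩ := key B hB hB0 hBu (dvd_mul_left B A)
  set Δ : MvPolynomial (Fin (k+2)) ℂ := ∏ p ∈ S, (X p.1 - X p.2) with hΔ
  have hΔ0 : Δ ≠ 0 := prod_ne_zero_iff.mpr fun p hp => (hprime p hp).ne_zero
  have hΔsq : Δ ^ 2 * (A₁ * B₁) = Δ ^ 2 * 1 := by
    rw [mul_one]
    calc Δ ^ 2 * (A₁ * B₁) = (Δ * A₁) * (Δ * B₁) := by ring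
    _ = A * B := by rw [← hA1, ← hB1]
    _ = ∏ p ∈ S, (X p.1 - X p.2) ^ 2 := h
    _ = Δ ^ 2 := by rw [hΔ, prod_pow]
  have hAB1 : A₁ * B₁ = 1 := mul_left_cancel₀ (pow_ne_zero 2 hΔ0) hΔsq
  obtain ⟨c, hc⟩ := isUnit_eq_C (IsUnit.of_mul_eq_one (a := A₁) B₁ hAB1)
  -- A = Δ * C c; now the sign argument shows c = 0, contradiction
  have hAc : A = Δ * C c := by rw [hA1, hc]
  have h01 : (0 : Fin (k+2)) ≠ 1 := by simp [Fin.ext_iff]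
  set v : Fin (k+2) → ℂ := fun t => ((t : ℕ) : ℂ) with hv
  have hv_inj : Function.Injective v := fun a b hab =>
    Fin.ext (Nat.cast_injective hab)
  have hD0 : (Matrix.vandermonde v).det ≠ 0 :=
    Matrix.det_vandermonde_ne_zero_iff.mpr hv_inj
  have heval : ∀ w : Fin (k+2) → ℂ, eval w A = (Matrix.vandermonde w).det * c := by
    intro w
    rw [hAc, map_mul, eval_C, hΔ, map_prod, ← prod_pairs_eq_det w]
    congr 1
    exact Finset.prod_congr rfl fun p _ => by simp
  have hsymm := congrArg (eval v) (hA (Equiv.swap 0 1))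
  rw [eval_rename, heval] at hsymm
  rw [heval v] at hsymm
  have hperm : (Matrix.vandermonde (v ∘ (Equiv.swap (0 : Fin (k+2)) 1))).det
      = -(Matrix.vandermonde v).det := by
    have hmat : Matrix.vandermonde (v ∘ (Equiv.swap (0 : Fin (k+2)) 1))
        = (Matrix.vandermonde v).submatrix (Equiv.swap (0 : Fin (k+2)) 1) id := rfl
    rw [hmat, Matrix.det_permute, Equiv.Perm.sign_swap h01]
    simp
  rw [hperm] at hsymm
  have hc0 : c = 0 := by
    have h2 : (2 : ℂ) * ((Matrix.vandermonde v).det * c) = 0 := by linear_combination -hsymm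
    rcases mul_eq_zero.mp h2 with h3 | h3
    · norm_num at h3
    · rcases mul_eq_zero.mp h3 with h4 | h4
      · exact absurd h4 hD0
      · exact h4
  rw [hc0, map_zero, mul_zero] at hAc
  exact hA0 hAc
end
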